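/- Let d ∈ ℕ and let K₋, K₀, K₊ be real d×d matrices with K₋ᵀ = K₊ and K₀ᵀ = K₀. Suppose that for every finitely supported sequence u : ℤ → ℂ^d one has Re( Σ_{j∈ℤ} ⟨u(j), K₋·u(j−1) + K₀·u(j) + K₊·u(j+1)⟩ ) ≥ 0, where ⟨x, y⟩ = Σ_i conj(x_i)·y_i and the real matrices act on ℂ^d via their entrywise complex coercions. Then for every θ ∈ ℝ the complex d×d matrix 𝒦(θ) = K₀ + e^{−iθ}·K₋ + e^{iθ}·K₊ is Hermitian and positive semidefinite. -/

import Mathlib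

open Matrix Complex ComplexOrder

/-- If the global block-tridiagonal quadratic form generated by real blocks
`K₋, K₀, K₊` (with `K₋ᵀ = K₊`, `K₀ᵀ = K₀`) is nonnegative on all finitely
supported sequences, then the Fourier symbol
`𝒦(θ) = K₀ + e^{−iθ}K₋ + e^{iθ}K₊` is Hermitian positive semidefinite. -/
theorem symbol_posSemidef
    (d : ℕ) (Km K0 Kp : Matrix (Fin d) (Fin d) ℝ)
    (hKm : Kmᵀ = Kp) (hK0 : K0ᵀ = K0)
    (hpos : ∀ u : ℤ → Fin d → ℂ, (Function.support u).Finite →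
      0 ≤ (∑ᶠ j : ℤ, star (u j) ⬝ᵥ
        ((Km.map (Complex.ofReal)).mulVec (u (j - 1))
          + (K0.map (Complex.ofReal)).mulVec (u j)
          + (Kp.map (Complex.ofReal)).mulVec (u (j + 1)))).re) :
    ∀ θ : ℝ,
      ((K0.map (Complex.ofReal))
        + Complex.exp (-(θ : ℂ) * Complex.I) • (Km.map (Complex.ofReal))
        + Complex.exp ((θ : ℂ) * Complex.I) • (Kp.map (Complex.ofReal))).IsHermitian
      ∧
      ((K0.map (Complex.ofReal))
        + Complex.exp (-(θ : ℂ) * Complex.I) • (Km.map (Complex.ofReal))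
        + Complex.exp ((θ : ℂ) * Complex.I) • (Kp.map (Complex.ofReal))).PosSemidef := by
  intro θ
  set Km' := Km.map (Complex.ofReal) with hKm'def
  set K0' := K0.map (Complex.ofReal) with hK0'def
  set Kp' := Kp.map (Complex.ofReal) with hKp'def
  set cm := Complex.exp (-(θ : ℂ) * Complex.I) with hcmdef
  set cp := Complex.exp ((θ : ℂ) * Complex.I) with hcpdef
  -- conjugation facts
  have hscm : star cm = cp := by
    rw [hcmdef, hcpdef, Complex.star_def, ← Complex.exp_conj]
    congr 1
    simp [Complex.conj_I]
  have hscp : star cp = cm := by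
    rw [hcmdef, hcpdef, Complex.star_def, ← Complex.exp_conj]
    congr 1
    simp [Complex.conj_I]
  have hKmH : Km'ᴴ = Kp' := by
    ext i j
    simp [hKm'def, hKp'def, conjTranspose_apply, ← hKm]
  have hKpH : Kp'ᴴ = Km' := by
    ext i j
    simp [hKp'def, hKm'def, conjTranspose_apply, ← hKm]
  have hK0H : K0'ᴴ = K0' := by
    ext i j
    simp [hK0'def, conjTranspose_apply]
    exact congrFun (congrFun hK0 i) j
  have hherm : (K0' + cm • Km' + cp • Kp').IsHermitian := by
    unfold Matrix.IsHermitian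
    rw [conjTranspose_add, conjTranspose_add, conjTranspose_smul, conjTranspose_smul,
      hK0H, hKmH, hKpH, hscm, hscp]
    abel
  refine ⟨hherm, posSemidef_iff_dotProduct_mulVec.mpr ⟨hherm, ?_⟩⟩
  intro x
  set z := star x ⬝ᵥ (K0' + cm • Km' + cp • Kp') *ᵥ x with hzdef
  -- z is self-conjugate, hence has zero imaginary part
  have hstarz : star z = z := by
    conv_lhs => rw [hzdef, star_dotProduct, star_star, star_mulVec, hherm.eq,
      ← dotProduct_mulVec]
  rw [Complex.nonneg_iff]
  constructor
  · -- real part nonneg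
    set Am := star x ⬝ᵥ Km' *ᵥ x with hAm
    set A0 := star x ⬝ᵥ K0' *ᵥ x with hA0
    set Ap := star x ⬝ᵥ Kp' *ᵥ x with hAp
    have hz : z = A0 + cm * Am + cp * Ap := by
      rw [hzdef, add_mulVec, add_mulVec, smul_mulVec, smul_mulVec,
        dotProduct_add, dotProduct_add, dotProduct_smul, dotProduct_smul,
        smul_eq_mul, smul_eq_mul]
    set a := A0.re with ha
    set b := (cm * Am).re + (cp * Ap).re with hb
    have hzre : z.re = a + b := by rw [hz]; simp [ha, hb]; ring
    rw [hzre]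
    -- the key family of inequalities from the global quadratic form
    have key : ∀ n : ℕ, 0 ≤ ((n : ℝ) + 1) * a + (n : ℝ) * b := by
      intro n
      set N : ℤ := (n : ℤ) + 1 with hN
      set φ : ℤ → ℂ := fun j => Complex.exp ((j : ℂ) * θ * Complex.I) with hφ
      have hφmul : ∀ a b : ℤ, star (φ a) * φ b = Complex.exp (((b - a : ℤ) : ℂ) * θ * Complex.I) := by
        intro a b
        rw [hφ, Complex.star_def, ← Complex.exp_conj, ← Complex.exp_add]
        congr 1
        push_cast
        simp [Complex.conj_I]
        ring
      set u : ℤ → Fin d → ℂ :=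
        fun j => if j ∈ Finset.Ico (0 : ℤ) N then φ j • x else 0 with hu
      have hsupp : (Function.support u).Finite := by
        apply Set.Finite.subset (Finset.Ico (0 : ℤ) N).finite_toSet
        intro j hj
        by_contra hmem
        have : u j = 0 := by
          simp only [hu]
          exact if_neg (fun h => hmem (Finset.mem_coe.mpr h))
        exact Function.mem_support.mp hj this
      have h1 := hpos u hsupp
      set F : ℤ → ℂ := fun j => star (u j) ⬝ᵥ
        (Km' *ᵥ u (j - 1) + K0' *ᵥ u j + Kp' *ᵥ u (j + 1)) with hF
      have hfin : ∑ᶠ j : ℤ, F j = ∑ j ∈ Finset.Ico (0 : ℤ) N, F j := by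
        apply finsum_eq_sum_of_support_subset
        intro j hj
        by_contra hmem
        have hmem' : j ∉ Finset.Ico (0 : ℤ) N := fun h => hmem (Finset.mem_coe.mpr h)
        apply hj
        simp only [hF, hu, if_neg hmem', star_zero, zero_dotProduct]
      have hFval : ∀ j ∈ Finset.Ico (0 : ℤ) N, F j =
          (if j ∈ Finset.Ico (1 : ℤ) N then cm * Am else 0) + A0
            + (if j ∈ Finset.Ico (0 : ℤ) (N - 1) then cp * Ap else 0) := by
        intro j hj
        have hj' := Finset.mem_Ico.mp hj
        by_cases hb1 : j ∈ Finset.Ico (1 : ℤ) N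
          <;> by_cases hb2 : j ∈ Finset.Ico (0 : ℤ) (N - 1)
        all_goals
          have hb1' : ((j - 1) ∈ Finset.Ico (0 : ℤ) N) =
              (j ∈ Finset.Ico (1 : ℤ) N) := by
            simp only [Finset.mem_Ico, eq_iff_iff]; omega
          have hb2' : ((j + 1) ∈ Finset.Ico (0 : ℤ) N) =
              (j ∈ Finset.Ico (0 : ℤ) (N - 1)) := by
            simp only [Finset.mem_Ico, eq_iff_iff]; omega
          simp only [hF, hu, hb1', hb2', if_pos hj, hb1, hb2, if_true, if_false,
            mulVec_zero, mulVec_smul, dotProduct_add, star_smul,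
            smul_dotProduct, dotProduct_smul, smul_eq_mul, dotProduct_zero,
            add_zero, zero_add, mul_zero]
        · have e1 : star (φ j) * φ (j - 1) = cm := by
            rw [hφmul, hcmdef]; congr 1; push_cast; ring
          have e2 : star (φ j) * φ j = 1 := by simpa using hφmul j j
          have e3 : star (φ j) * φ (j + 1) = cp := by
            rw [hφmul, hcpdef]; congr 1; push_cast; ring
          rw [← hAm, ← hA0, ← hAp]
          linear_combination Am * e1 + A0 * e2 + Ap * e3
        · have e1 : star (φ j) * φ (j - 1) = cm := by
            rw [hφmul, hcmdef]; congr 1; push_cast; ring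
          have e2 : star (φ j) * φ j = 1 := by simpa using hφmul j j
          rw [← hAm, ← hA0]
          linear_combination Am * e1 + A0 * e2
        · have e2 : star (φ j) * φ j = 1 := by simpa using hφmul j j
          have e3 : star (φ j) * φ (j + 1) = cp := by
            rw [hφmul, hcpdef]; congr 1; push_cast; ring
          rw [← hA0, ← hAp]
          linear_combination A0 * e2 + Ap * e3
        · have e2 : star (φ j) * φ j = 1 := by simpa using hφmul j j
          rw [← hA0]
          linear_combination A0 * e2
      rw [hfin, Finset.sum_congr rfl hFval] at h1
      rw [Finset.sum_add_distrib, Finset.sum_add_distrib, Finset.sum_ite_mem,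
        Finset.sum_ite_mem, Finset.sum_const, Finset.sum_const, Finset.sum_const] at h1
      have hi1 : Finset.Ico (0 : ℤ) N ∩ Finset.Ico (1 : ℤ) N = Finset.Ico (1 : ℤ) N := by
        rw [Finset.Ico_inter_Ico]; congr 1 <;> omega
      have hi2 : Finset.Ico (0 : ℤ) N ∩ Finset.Ico (0 : ℤ) (N - 1)
          = Finset.Ico (0 : ℤ) (N - 1) := by
        rw [Finset.Ico_inter_Ico]; congr 1 <;> omega
      rw [hi1, hi2, Int.card_Ico, Int.card_Ico, Int.card_Ico] at h1
      have hc1 : (N - 1).toNat = n := by omega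
      have hc2 : (N - 0).toNat = n + 1 := by omega
      have hc3 : (N - 1 - 0).toNat = n := by omega
      rw [hc1, hc2, hc3] at h1
      simp only [nsmul_eq_mul] at h1
      have : ((↑n * (cm * Am) + (↑n + 1) * A0 + ↑n * (cp * Ap)) : ℂ).re
          = ((n : ℝ) + 1) * a + (n : ℝ) * b := by
        simp [ha, hb, Complex.add_re, Complex.mul_re]
        push_cast
        ring
      rw [show ((n + 1 : ℕ) : ℂ) = ((n : ℂ) + 1) by push_cast; ring] at h1
      rw [this] at h1
      exact h1
    -- take n → ∞
    by_contra hcon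
    push_neg at hcon
    obtain ⟨n, hn⟩ := exists_nat_gt (b / (a + b))
    have hlt : ((n : ℝ) + 1) * (a + b) < b := by
      have h2 : b / (a + b) < (n : ℝ) + 1 := lt_trans hn (by linarith)
      have := (div_lt_iff_of_neg (by linarith : a + b < 0)).mp h2
      linarith
    have := key n
    nlinarith
  · -- imaginary part zero
    exact (Complex.conj_eq_iff_im.mp (by rw [← Complex.star_def]; exact hstarz)).symm
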